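/- Let $J$ be a prime ideal of the power series ring $\mathbb{C}[[u,t]]$ that is invariant under the derivation $t\partial_t - u\partial_u$ (equivalently, invariant under the $\mathbb{C}^*$-action $t\mapsto zt$, $u\mapsto z^{-1}u$). Then $J$ is one of the four ideals $(0)$, $(u)$, $(t)$, or $(u,t)$. -/

import Mathlib

/-- The derivation `t∂t - u∂u` on `ℂ[[u,t]]`, where `u = X 0` and `t = X 1`:
it multiplies the monomial `u^a t^b` by `b - a`. -/
noncomputable def Dtu (f : MvPowerSeries (Fin 2) ℂ) : MvPowerSeries (Fin 2) ℂ :=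
  fun d => (((d 1 : ℤ) - (d 0 : ℤ) : ℤ) : ℂ) * MvPowerSeries.coeff d f


open MvPowerSeries Finsupp

noncomputable section

abbrev RR := MvPowerSeries (Fin 2) ℂ

def mk2 (F : (Fin 2 →₀ ℕ) → ℂ) : RR := F

@[simp] lemma coeff_mk2 (F : (Fin 2 →₀ ℕ) → ℂ) (d) : MvPowerSeries.coeff d (mk2 F) = F d :=
  rfl

def ee (a b : ℕ) : Fin 2 →₀ ℕ := Finsupp.single 0 a + Finsupp.single 1 b

@[simp] lemma ee0 (a b : ℕ) : ee a b 0 = a := by simp [ee, Finsupp.single_apply]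
@[simp] lemma ee1 (a b : ℕ) : ee a b 1 = b := by simp [ee, Finsupp.single_apply]

lemma eq_ee (d : Fin 2 →₀ ℕ) : d = ee (d 0) (d 1) := by
  ext i; fin_cases i <;> simp

lemma ee_le (a b : ℕ) (d : Fin 2 →₀ ℕ) : ee a b ≤ d ↔ a ≤ d 0 ∧ b ≤ d 1 := by
  constructor
  · intro h; exact ⟨by simpa using h 0, by simpa using h 1⟩
  · intro ⟨h0, h1⟩ i; fin_cases i <;> simpa

end
noncomputable section
open MvPowerSeries

lemma coeff_mono_mul (a b : ℕ) (g : RR) (d : Fin 2 →₀ ℕ) :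
    MvPowerSeries.coeff d (monomial (ee a b) 1 * g) =
      if a ≤ d 0 ∧ b ≤ d 1 then MvPowerSeries.coeff (ee (d 0 - a) (d 1 - b)) g else 0 := by
  rw [MvPowerSeries.coeff_monomial_mul]
  by_cases h : ee a b ≤ d
  · rw [if_pos h, if_pos ((ee_le a b d).mp h), one_mul]
    congr 1
    rw [eq_ee (d - ee a b)]
    simp [Finsupp.tsub_apply]
  · rw [if_neg h, if_neg (fun hc => h ((ee_le a b d).mpr hc))]

lemma X0_eq : (MvPowerSeries.X 0 : RR) = monomial (ee 1 0) 1 := by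
  rw [show ee 1 0 = Finsupp.single 0 1 by ext i; fin_cases i <;> simp]
  rfl

lemma X1_eq : (MvPowerSeries.X 1 : RR) = monomial (ee 0 1) 1 := by
  rw [show ee 0 1 = Finsupp.single 1 1 by ext i; fin_cases i <;> simp]
  rfl

lemma X0_pow_eq (k : ℕ) : (MvPowerSeries.X 0 : RR) ^ k = monomial (ee k 0) 1 := by
  rw [MvPowerSeries.X_pow_eq, show ee k 0 = Finsupp.single 0 k by ext i; fin_cases i <;> simp]

lemma X1_pow_eq (k : ℕ) : (MvPowerSeries.X 1 : RR) ^ k = monomial (ee 0 k) 1 := by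
  rw [MvPowerSeries.X_pow_eq, show ee 0 k = Finsupp.single 1 k by ext i; fin_cases i <;> simp]

end
noncomputable section
open MvPowerSeries

/-- If all coefficients with `d 0 < k` vanish, then `f = u^k * (shift)`. -/
lemma eq_X0pow_mul {f : RR} (k : ℕ) (h : ∀ d : Fin 2 →₀ ℕ, d 0 < k → coeff d f = 0) :
    f = MvPowerSeries.X 0 ^ k * mk2 (fun d => coeff (ee (d 0 + k) (d 1)) f) := by
  ext d
  rw [X0_pow_eq, coeff_mono_mul]
  by_cases hk : k ≤ d 0
  · rw [if_pos ⟨hk, Nat.zero_le _⟩, coeff_mk2]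
    simp only [ee0, ee1]
    rw [Nat.sub_add_cancel hk, Nat.sub_zero, ← eq_ee]
  · rw [if_neg (fun hc => hk hc.1), h d (lt_of_not_ge hk)]

lemma eq_X1pow_mul {f : RR} (k : ℕ) (h : ∀ d : Fin 2 →₀ ℕ, d 1 < k → coeff d f = 0) :
    f = MvPowerSeries.X 1 ^ k * mk2 (fun d => coeff (ee (d 0) (d 1 + k)) f) := by
  ext d
  rw [X1_pow_eq, coeff_mono_mul]
  by_cases hk : k ≤ d 1
  · rw [if_pos ⟨Nat.zero_le _, hk⟩, coeff_mk2]
    simp only [ee0, ee1]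
    rw [Nat.sub_add_cancel hk, Nat.sub_zero, ← eq_ee]
  · rw [if_neg (fun hc => hk hc.2), h d (lt_of_not_ge hk)]

/-- Splitting off the `u`-free part: `f = u * (shift) + (u-free part)`. -/
lemma split_ufree (f : RR) :
    f = MvPowerSeries.X 0 * mk2 (fun d => coeff (ee (d 0 + 1) (d 1)) f) +
        mk2 (fun d => if d 0 = 0 then coeff d f else 0) := by
  ext d
  rw [map_add, X0_eq, coeff_mono_mul, coeff_mk2, coeff_mk2]
  by_cases h0 : d 0 = 0
  · rw [if_neg (by omega), if_pos h0, zero_add]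
  · rw [if_pos ⟨by omega, Nat.zero_le _⟩, if_neg h0, add_zero]
    simp only [ee0, ee1]
    rw [Nat.sub_add_cancel (by omega), Nat.sub_zero, ← eq_ee]

lemma split_tfree (f : RR) :
    f = MvPowerSeries.X 1 * mk2 (fun d => coeff (ee (d 0) (d 1 + 1)) f) +
        mk2 (fun d => if d 1 = 0 then coeff d f else 0) := by
  ext d
  rw [map_add, X1_eq, coeff_mono_mul, coeff_mk2, coeff_mk2]
  by_cases h0 : d 1 = 0
  · rw [if_neg (by omega), if_pos h0, zero_add]
  · rw [if_pos ⟨Nat.zero_le _, by omega⟩, if_neg h0, add_zero]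
    simp only [ee0, ee1]
    rw [Nat.sub_add_cancel (by omega), Nat.sub_zero, ← eq_ee]

lemma unit_of_constantCoeff {f : RR} (h : coeff 0 f ≠ 0) : IsUnit f := by
  rw [MvPowerSeries.isUnit_iff_constantCoeff, isUnit_iff_ne_zero]
  exact h

lemma coeff_zero_of_mem {J : Ideal RR} (hJ : J ≠ ⊤) {f : RR} (hf : f ∈ J) :
    coeff 0 f = 0 := by
  by_contra h
  exact hJ (Ideal.eq_top_of_isUnit_mem J hf (unit_of_constantCoeff h))

end
noncomputable section
open MvPowerSeries Finset

/-- Convolution formula for multiplication by a series supported on `{d | d 1 = 0}`. -/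
lemma coeff_mul_tfreeSupported (f q : RR) (hq : ∀ d : Fin 2 →₀ ℕ, d 1 ≠ 0 → coeff d q = 0)
    (d : Fin 2 →₀ ℕ) :
    coeff d (f * q) = ∑ i ∈ Finset.range (d 0 + 1),
      coeff (ee (d 0 - i) (d 1)) f * coeff (ee i 0) q := by
  classical
  rw [MvPowerSeries.coeff_mul]
  rw [← Finset.sum_filter_of_ne
    (p := fun p : (Fin 2 →₀ ℕ) × (Fin 2 →₀ ℕ) => p.2 1 = 0)
    (fun p _ hp => by
      by_contra hc
      exact hp (by rw [hq p.2 hc, mul_zero]))]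
  refine Finset.sum_nbij' (i := fun p => p.2 0) (j := fun i => (ee (d 0 - i) (d 1), ee i 0))
    ?_ ?_ ?_ ?_ ?_
  · intro p hp
    simp only [Finset.mem_filter, Finset.HasAntidiagonal.mem_antidiagonal] at hp
    have : p.1 0 + p.2 0 = d 0 := by
      rw [← hp.1]; simp [Finsupp.add_apply]
    simp only [Finset.mem_range]; omega
  · intro i hi
    simp only [Finset.mem_range] at hi
    simp only [Finset.mem_filter, Finset.HasAntidiagonal.mem_antidiagonal, ee1, and_true]
    ext j; fin_cases j <;> simp [Finsupp.add_apply] <;> omega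
  · intro p hp
    simp only [Finset.mem_filter, Finset.HasAntidiagonal.mem_antidiagonal] at hp
    have h0 : p.1 0 + p.2 0 = d 0 := by rw [← hp.1]; simp [Finsupp.add_apply]
    have h1 : p.1 1 + p.2 1 = d 1 := by rw [← hp.1]; simp [Finsupp.add_apply]
    have hp2 := hp.2
    have e1 : p.1 = ee (d 0 - p.2 0) (d 1) := by
      conv_lhs => rw [eq_ee p.1]
      rw [show p.1 0 = d 0 - p.2 0 by omega, show p.1 1 = d 1 by omega]
    have e2 : p.2 = ee (p.2 0) 0 := by
      conv_lhs => rw [eq_ee p.2]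
      rw [hp.2]
    rw [← e1, ← e2]
  · intro i hi; simp
  · intro p hp
    simp only [Finset.mem_filter, Finset.HasAntidiagonal.mem_antidiagonal] at hp
    have h0 : p.1 0 + p.2 0 = d 0 := by rw [← hp.1]; simp [Finsupp.add_apply]
    have h1 : p.1 1 + p.2 1 = d 1 := by rw [← hp.1]; simp [Finsupp.add_apply]
    have hp2 := hp.2
    have e1 : p.1 = ee (d 0 - p.2 0) (d 1) := by
      conv_lhs => rw [eq_ee p.1]
      rw [show p.1 0 = d 0 - p.2 0 by omega, show p.1 1 = d 1 by omega]
    have e2 : p.2 = ee (p.2 0) 0 := by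
      conv_lhs => rw [eq_ee p.2]
      rw [hp2]
    rw [← e1, ← e2]

end
noncomputable section
open MvPowerSeries Finset

/-- Coefficients of the inverse of a power series with nonzero constant term. -/
lemma exists_inv_seq (c : ℕ → ℂ) (hc : c 0 ≠ 0) :
    ∃ r : ℕ → ℂ, ∀ n, (∑ i ∈ Finset.range (n + 1), r i * c (n - i)) =
      if n = 0 then 1 else 0 := by
  refine ⟨fun i => PowerSeries.coeff i (PowerSeries.mk c)⁻¹, fun n => ?_⟩
  have h : (PowerSeries.mk c)⁻¹ * PowerSeries.mk c = 1 :=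
    PowerSeries.inv_mul_cancel _ (by simpa using hc)
  have := congrArg (PowerSeries.coeff n) h
  rw [PowerSeries.coeff_mul, PowerSeries.coeff_one] at this
  rw [← this, Finset.Nat.sum_antidiagonal_eq_sum_range_succ_mk]
  simp [PowerSeries.coeff_mk]

/-- If a nonzero element of a prime ideal is supported on `u`-free monomials then `t` is in
the ideal. -/
lemma X1_mem_of_ufree {J : Ideal RR} (hJ : J.IsPrime) {f : RR}
    (hsupp : ∀ d : Fin 2 →₀ ℕ, d 0 ≠ 0 → MvPowerSeries.coeff d f = 0)
    (hfJ : f ∈ J) (hne : f ≠ 0) : MvPowerSeries.X 1 ∈ J := by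
  classical
  have hP : ∃ b, MvPowerSeries.coeff (ee 0 b) f ≠ 0 := by
    by_contra h
    push_neg at h
    apply hne
    ext d
    by_cases h0 : d 0 = 0
    · rw [eq_ee d, h0]; exact (h (d 1)).trans (by simp)
    · exact (hsupp d h0).trans (by simp)
  set m := Nat.find hP with hm
  set ε : RR := mk2 (fun d => if d 0 = 0 then MvPowerSeries.coeff (ee 0 (d 1 + m)) f else 0)
    with hε
  have hfε : f = monomial (ee 0 m) 1 * ε := by
    ext d
    rw [coeff_mono_mul, hε]
    by_cases hk : m ≤ d 1
    · rw [if_pos ⟨Nat.zero_le _, hk⟩, coeff_mk2]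
      simp only [ee0, ee1, Nat.sub_zero]
      by_cases h0 : d 0 = 0
      · rw [if_pos h0, Nat.sub_add_cancel hk]
        conv_lhs => rw [eq_ee d, h0]
      · rw [if_neg h0, hsupp d h0]
    · rw [if_neg (fun hco => hk hco.2)]
      by_cases h0 : d 0 = 0
      · rw [eq_ee d, h0]
        exact by_contra fun hcon => hk (le_of_not_gt fun hlt => hcon (by
          have := Nat.find_min hP (m := d 1) hlt
          simpa using this))
      · exact hsupp d h0
  have hεu : IsUnit ε := by
    apply unit_of_constantCoeff
    rw [hε, coeff_mk2]
    simp only [Finsupp.coe_zero, Pi.zero_apply, if_pos rfl, zero_add]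
    exact Nat.find_spec hP
  obtain ⟨v, hv⟩ := hεu
  have hmono : monomial (ee 0 m) 1 ∈ J := by
    have : (monomial (ee 0 m) 1 : RR) = f * ↑v⁻¹ := by
      rw [hfε, ← hv, mul_assoc, Units.mul_inv, mul_one]
    rw [this]
    exact J.mul_mem_right _ hfJ
  exact hJ.mem_of_pow_mem m (by rw [X1_pow_eq]; exact hmono)

/-- Symmetric version: nonzero `t`-free-supported element gives `u` in the ideal. -/
lemma X0_mem_of_tfree {J : Ideal RR} (hJ : J.IsPrime) {f : RR}
    (hsupp : ∀ d : Fin 2 →₀ ℕ, d 1 ≠ 0 → MvPowerSeries.coeff d f = 0)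
    (hfJ : f ∈ J) (hne : f ≠ 0) : MvPowerSeries.X 0 ∈ J := by
  classical
  have hP : ∃ a, MvPowerSeries.coeff (ee a 0) f ≠ 0 := by
    by_contra h
    push_neg at h
    apply hne
    ext d
    by_cases h0 : d 1 = 0
    · rw [eq_ee d, h0]; exact (h (d 0)).trans (by simp)
    · exact (hsupp d h0).trans (by simp)
  set m := Nat.find hP with hm
  set ε : RR := mk2 (fun d => if d 1 = 0 then MvPowerSeries.coeff (ee (d 0 + m) 0) f else 0)
    with hε
  have hfε : f = monomial (ee m 0) 1 * ε := by
    ext d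
    rw [coeff_mono_mul, hε]
    by_cases hk : m ≤ d 0
    · rw [if_pos ⟨hk, Nat.zero_le _⟩, coeff_mk2]
      simp only [ee0, ee1, Nat.sub_zero]
      by_cases h0 : d 1 = 0
      · rw [if_pos h0, Nat.sub_add_cancel hk]
        conv_lhs => rw [eq_ee d, h0]
      · rw [if_neg h0, hsupp d h0]
    · rw [if_neg (fun hco => hk hco.1)]
      by_cases h0 : d 1 = 0
      · rw [eq_ee d, h0]
        exact by_contra fun hcon => hk (le_of_not_gt fun hlt => hcon (by
          have := Nat.find_min hP (m := d 0) hlt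
          simpa using this))
      · exact hsupp d h0
  have hεu : IsUnit ε := by
    apply unit_of_constantCoeff
    rw [hε, coeff_mk2]
    simp only [Finsupp.coe_zero, Pi.zero_apply, if_pos rfl, zero_add]
    exact Nat.find_spec hP
  obtain ⟨v, hv⟩ := hεu
  have hmono : monomial (ee m 0) 1 ∈ J := by
    have : (monomial (ee m 0) 1 : RR) = f * ↑v⁻¹ := by
      rw [hfε, ← hv, mul_assoc, Units.mul_inv, mul_one]
    rw [this]
    exact J.mul_mem_right _ hfJ
  exact hJ.mem_of_pow_mem m (by rw [X0_pow_eq]; exact hmono)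

end
noncomputable section
open MvPowerSeries Finset

/-- The `u`-free part of an element of an ideal containing `u` is in the ideal. -/
lemma ufree_mem {J : Ideal RR} (hu : MvPowerSeries.X 0 ∈ J) {f : RR} (hf : f ∈ J) :
    mk2 (fun d => if d 0 = 0 then MvPowerSeries.coeff d f else 0) ∈ J := by
  have h := split_ufree f
  have : mk2 (fun d => if d 0 = 0 then MvPowerSeries.coeff d f else 0) =
      f - MvPowerSeries.X 0 * mk2 (fun d => MvPowerSeries.coeff (ee (d 0 + 1) (d 1)) f) := by
    rw [← sub_eq_iff_eq_add'] at h
    exact h.symm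
  rw [this]
  exact J.sub_mem hf (J.mul_mem_right _ hu)

lemma tfree_mem {J : Ideal RR} (ht : MvPowerSeries.X 1 ∈ J) {f : RR} (hf : f ∈ J) :
    mk2 (fun d => if d 1 = 0 then MvPowerSeries.coeff d f else 0) ∈ J := by
  have h := split_tfree f
  have : mk2 (fun d => if d 1 = 0 then MvPowerSeries.coeff d f else 0) =
      f - MvPowerSeries.X 1 * mk2 (fun d => MvPowerSeries.coeff (ee (d 0) (d 1 + 1)) f) := by
    rw [← sub_eq_iff_eq_add'] at h
    exact h.symm
  rw [this]
  exact J.sub_mem hf (J.mul_mem_right _ ht)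

/-- Case: both variables in `J`. -/
lemma case_both {J : Ideal RR} (hJ : J.IsPrime) (hu : MvPowerSeries.X 0 ∈ J)
    (ht : MvPowerSeries.X 1 ∈ J) :
    J = Ideal.span {MvPowerSeries.X 0, MvPowerSeries.X 1} := by
  apply le_antisymm
  · intro f hf
    have h0 : MvPowerSeries.coeff 0 f = 0 := coeff_zero_of_mem hJ.ne_top hf
    have hX0 : (MvPowerSeries.X 0 : RR) ∈ Ideal.span {MvPowerSeries.X 0, MvPowerSeries.X 1} :=
      Ideal.subset_span (by simp)
    have hX1 : (MvPowerSeries.X 1 : RR) ∈ Ideal.span {MvPowerSeries.X 0, MvPowerSeries.X 1} :=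
      Ideal.subset_span (by simp)
    set uf : RR := mk2 (fun d => if d 0 = 0 then MvPowerSeries.coeff d f else 0) with huf
    have hufsplit : uf = MvPowerSeries.X 1 ^ 1 *
        mk2 (fun d => MvPowerSeries.coeff (ee (d 0) (d 1 + 1)) uf) := by
      apply eq_X1pow_mul
      intro d hd
      rw [huf, coeff_mk2]
      by_cases hd0 : d 0 = 0
      · rw [if_pos hd0]
        have : d = 0 := by
          rw [eq_ee d, hd0, show d 1 = 0 by omega]
          ext i; fin_cases i <;> simp
        rw [this]; exact h0
      · rw [if_neg hd0]
    rw [split_ufree f]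
    apply Ideal.add_mem
    · exact Ideal.mul_mem_right _ _ hX0
    · rw [show mk2 (fun d => if d 0 = 0 then MvPowerSeries.coeff d f else 0) = uf from rfl,
        hufsplit, pow_one]
      exact Ideal.mul_mem_right _ _ hX1
  · rw [Ideal.span_le]
    rintro x hx
    rcases hx with rfl | hx
    · exact hu
    · rw [Set.mem_singleton_iff] at hx
      rw [hx]; exact ht

/-- Case: `u ∈ J`, `t ∉ J`. -/
lemma case_u {J : Ideal RR} (hJ : J.IsPrime) (hu : MvPowerSeries.X 0 ∈ J)
    (ht : MvPowerSeries.X 1 ∉ J) :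
    J = Ideal.span {MvPowerSeries.X 0} := by
  apply le_antisymm
  · intro f hf
    set uf : RR := mk2 (fun d => if d 0 = 0 then MvPowerSeries.coeff d f else 0) with huf
    have hufJ : uf ∈ J := ufree_mem hu hf
    have hufz : uf = 0 := by
      by_contra hne
      exact ht (X1_mem_of_ufree hJ (fun d hd => by rw [huf, coeff_mk2, if_neg hd]) hufJ hne)
    have hcoe : ∀ d : Fin 2 →₀ ℕ, d 0 < 1 → MvPowerSeries.coeff d f = 0 := by
      intro d hd
      have : MvPowerSeries.coeff d uf = 0 := by rw [hufz]; simp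
      rw [huf, coeff_mk2, if_pos (by omega)] at this
      exact this
    rw [eq_X0pow_mul 1 hcoe, pow_one, Ideal.mem_span_singleton']
    exact ⟨_, mul_comm _ _⟩
  · rw [Ideal.span_le, Set.singleton_subset_iff]
    exact hu

/-- Case: `t ∈ J`, `u ∉ J`. -/
lemma case_t {J : Ideal RR} (hJ : J.IsPrime) (ht : MvPowerSeries.X 1 ∈ J)
    (hu : MvPowerSeries.X 0 ∉ J) :
    J = Ideal.span {MvPowerSeries.X 1} := by
  apply le_antisymm
  · intro f hf
    set tf : RR := mk2 (fun d => if d 1 = 0 then MvPowerSeries.coeff d f else 0) with htf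
    have htfJ : tf ∈ J := tfree_mem ht hf
    have htfz : tf = 0 := by
      by_contra hne
      exact hu (X0_mem_of_tfree hJ (fun d hd => by rw [htf, coeff_mk2, if_neg hd]) htfJ hne)
    have hcoe : ∀ d : Fin 2 →₀ ℕ, d 1 < 1 → MvPowerSeries.coeff d f = 0 := by
      intro d hd
      have : MvPowerSeries.coeff d tf = 0 := by rw [htfz]; simp
      rw [htf, coeff_mk2, if_pos (by omega)] at this
      exact this
    rw [eq_X1pow_mul 1 hcoe, pow_one, Ideal.mem_span_singleton']
    exact ⟨_, mul_comm _ _⟩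
  · rw [Ideal.span_le, Set.singleton_subset_iff]
    exact ht

end
noncomputable def Dtu' (f : MvPowerSeries (Fin 2) ℂ) : MvPowerSeries (Fin 2) ℂ :=
  fun d => (((d 1 : ℤ) - (d 0 : ℤ) : ℤ) : ℂ) * MvPowerSeries.coeff d f

noncomputable section
open MvPowerSeries Finset

lemma coeff_Dtu (f : RR) (d : Fin 2 →₀ ℕ) :
    MvPowerSeries.coeff d (Dtu' f) =
      (((d 1 : ℤ) - (d 0 : ℤ) : ℤ) : ℂ) * MvPowerSeries.coeff d f := rfl

/-- Key lemma: if neither variable belongs to the prime, invariant ideal `J`, then every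
element of `J` has vanishing `t`-free part. -/
lemma tfree_zero_of_all {J : Ideal RR} (hJ : J.IsPrime) (hinv : ∀ f ∈ J, Dtu' f ∈ J)
    (hu : MvPowerSeries.X 0 ∉ J) (ht : MvPowerSeries.X 1 ∉ J) :
    ∀ f ∈ J, ∀ a : ℕ, MvPowerSeries.coeff (ee a 0) f = 0 := by
  classical
  by_contra hcon
  push_neg at hcon
  obtain ⟨f₀', hf₀'J, a', ha'⟩ := hcon
  have hP : ∃ n, ∃ f ∈ J, MvPowerSeries.coeff (ee n 0) f ≠ 0 := ⟨a', f₀', hf₀'J, ha'⟩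
  set k := Nat.find hP with hk
  obtain ⟨f₀, hf₀J, hf₀⟩ := Nat.find_spec hP
  have hmin : ∀ a < k, ∀ f ∈ J, MvPowerSeries.coeff (ee a 0) f = 0 := by
    intro a ha f hf
    by_contra h
    exact Nat.find_min hP ha ⟨f, hf, h⟩
  set c : ℕ → ℂ := fun n => MvPowerSeries.coeff (ee (n + k) 0) f₀ with hc
  have hc0 : c 0 ≠ 0 := by rw [hc]; simpa using hf₀
  obtain ⟨r, hr⟩ := exists_inv_seq c hc0
  set q : RR := mk2 (fun d => if d 1 = 0 then r (d 0) else 0) with hq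
  have hqsupp : ∀ d : Fin 2 →₀ ℕ, d 1 ≠ 0 → MvPowerSeries.coeff d q = 0 :=
    fun d hd => by rw [hq, coeff_mk2, if_neg hd]
  set j : RR := f₀ * q with hj
  have hjJ : j ∈ J := J.mul_mem_right _ hf₀J
  have hf₀tf : ∀ m : ℕ, MvPowerSeries.coeff (ee m 0) f₀ =
      if k ≤ m then c (m - k) else 0 := by
    intro m
    by_cases h : k ≤ m
    · rw [if_pos h, hc]
      show MvPowerSeries.coeff (ee m 0) f₀ = MvPowerSeries.coeff (ee (m - k + k) 0) f₀
      rw [show m - k + k = m by omega]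
    · rw [if_neg h]
      exact hmin m (by omega) f₀ hf₀J
  -- the t-free part of j is exactly the monomial u^k
  have hjtf : ∀ a : ℕ, MvPowerSeries.coeff (ee a 0) j = if a = k then 1 else 0 := by
    intro a
    rw [hj, coeff_mul_tfreeSupported _ _ hqsupp]
    simp only [ee0, ee1]
    have hterm : ∀ i : ℕ, MvPowerSeries.coeff (ee (a - i) 0) f₀ *
        MvPowerSeries.coeff (ee i 0) q
        = (if k ≤ a - i then c (a - i - k) else 0) * r i := by
      intro i
      have h5 : MvPowerSeries.coeff (ee i 0) q = r i := by
        rw [hq, coeff_mk2]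
        simp
      rw [hf₀tf, h5]
    rcases lt_or_ge a k with hak | hak
    · rw [if_neg (by omega)]
      apply Finset.sum_eq_zero
      intro i _
      rw [hterm i, if_neg (by omega), zero_mul]
    · have h1 : ∑ i ∈ Finset.range (a + 1),
          MvPowerSeries.coeff (ee (a - i) 0) f₀ * MvPowerSeries.coeff (ee i 0) q
          = ∑ i ∈ Finset.range (a - k + 1), r i * c ((a - k) - i) := by
        rw [show (∑ i ∈ Finset.range (a + 1),
            MvPowerSeries.coeff (ee (a - i) 0) f₀ * MvPowerSeries.coeff (ee i 0) q)
            = ∑ i ∈ Finset.range (a + 1),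
              (if k ≤ a - i then c (a - i - k) else 0) * r i from
          Finset.sum_congr rfl fun i _ => hterm i]
        rw [← Finset.sum_subset (Finset.range_subset_range.mpr (by omega : a - k + 1 ≤ a + 1))
          (fun i hi hni => by
            simp only [Finset.mem_range] at hi hni
            rw [if_neg (by omega), zero_mul])]
        apply Finset.sum_congr rfl
        intro i hi
        simp only [Finset.mem_range] at hi
        rw [if_pos (by omega), show a - i - k = a - k - i by omega, mul_comm]
      rw [h1, hr]
      by_cases h : a = k
      · rw [if_pos (by omega), if_pos h]
      · rw [if_neg (by omega), if_neg h]
  -- the main induction: all coefficients of elements of J with u-degree < k vanish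
  have hS : ∀ b : ℕ, ∀ f ∈ J, ∀ a < k, MvPowerSeries.coeff (ee a b) f = 0 := by
    intro b
    induction b using Nat.strong_induction_on with
    | _ b IH =>
      rcases b with _ | b
      · intro f hf a ha; exact hmin a ha f hf
      · -- step (i): the coefficients of j itself
        set Dj : RR := Dtu' j + (MvPowerSeries.C (k : ℂ)) * j with hDjdef
        have hDj : Dj ∈ J := J.add_mem (hinv j hjJ) (J.mul_mem_left _ hjJ)
        have hDjco : ∀ d : Fin 2 →₀ ℕ, MvPowerSeries.coeff d Dj
            = ((((d 1 : ℤ) - (d 0 : ℤ) + (k : ℤ)) : ℤ) : ℂ) * MvPowerSeries.coeff d j := by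
          intro d
          rw [hDjdef, map_add, coeff_Dtu, MvPowerSeries.coeff_C_mul]
          push_cast
          ring
        have hDjtf : ∀ d : Fin 2 →₀ ℕ, d 1 < 1 → MvPowerSeries.coeff d Dj = 0 := by
          intro d hd
          have hd1 : d 1 = 0 := by omega
          rw [hDjco d]
          have hde : ee (d 0) 0 = d := by
            conv_rhs => rw [eq_ee d, hd1]
          have h2 := hjtf (d 0)
          rw [hde] at h2
          rw [h2]
          by_cases hdk : d 0 = k
          · rw [if_pos hdk, hd1, hdk]
            push_cast
            ring
          · rw [if_neg hdk, mul_zero]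
        set g : RR := mk2 (fun d => MvPowerSeries.coeff (ee (d 0) (d 1 + 1)) Dj) with hgdef
        have hmulg : (MvPowerSeries.X 1 : RR) * g ∈ J := by
          have h3 := eq_X1pow_mul 1 hDjtf
          rw [pow_one] at h3
          rw [← h3]
          exact hDj
        have hgJ : g ∈ J := (hJ.mem_or_mem hmulg).resolve_left ht
        have hjb : ∀ a < k, MvPowerSeries.coeff (ee a (b + 1)) j = 0 := by
          intro a ha
          have h1 : MvPowerSeries.coeff (ee a b) g = 0 := IH b (by omega) g hgJ a ha
          rw [hgdef, coeff_mk2] at h1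
          simp only [ee0, ee1] at h1
          rw [hDjco] at h1
          simp only [ee0, ee1] at h1
          rcases mul_eq_zero.mp h1 with h2 | h2
          · exfalso
            have h3 : ((b + 1 : ℕ) : ℤ) - (a : ℤ) + (k : ℤ) = 0 := by exact_mod_cast h2
            omega
          · exact h2
        -- step (ii): general elements of J
        intro f hf a ha
        set qf : RR := mk2 (fun d => if d 1 = 0 then
          MvPowerSeries.coeff (ee (d 0 + k) 0) f else 0) with hqf
        have hqfsupp : ∀ d : Fin 2 →₀ ℕ, d 1 ≠ 0 → MvPowerSeries.coeff d qf = 0 :=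
          fun d hd => by rw [hqf, coeff_mk2, if_neg hd]
        have hqfco : ∀ i : ℕ, MvPowerSeries.coeff (ee i 0) qf =
            MvPowerSeries.coeff (ee (i + k) 0) f := by
          intro i
          rw [hqf, coeff_mk2]
          simp
        set g2 : RR := f - j * qf with hg2def
        have hg2J : g2 ∈ J := J.sub_mem hf (J.mul_mem_right _ hjJ)
        have hg2tf : ∀ d : Fin 2 →₀ ℕ, d 1 < 1 → MvPowerSeries.coeff d g2 = 0 := by
          intro d hd
          have hd1 : d 1 = 0 := by omega
          have hde : ee (d 0) 0 = d := by
            conv_rhs => rw [eq_ee d, hd1]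
          rw [← hde, hg2def, map_sub, coeff_mul_tfreeSupported _ _ hqfsupp]
          simp only [ee0, ee1]
          have hterm : ∀ i : ℕ, MvPowerSeries.coeff (ee (d 0 - i) 0) j *
              MvPowerSeries.coeff (ee i 0) qf
              = (if d 0 - i = k then 1 else 0) * MvPowerSeries.coeff (ee (i + k) 0) f := by
            intro i
            rw [hjtf, hqfco]
          rcases lt_or_ge (d 0) k with hak | hak
          · rw [hmin (d 0) hak f hf, Finset.sum_eq_zero fun i _ => by
              rw [hterm i, if_neg (by omega), zero_mul]]
            ring
          · rw [Finset.sum_eq_single (d 0 - k)]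
            · rw [hterm, if_pos (by omega), one_mul, show d 0 - k + k = d 0 by omega]
              ring
            · intro i hi hne
              simp only [Finset.mem_range] at hi
              rw [hterm i, if_neg (by omega), zero_mul]
            · intro hni
              simp only [Finset.mem_range] at hni
              omega
        set g3 : RR := mk2 (fun d => MvPowerSeries.coeff (ee (d 0) (d 1 + 1)) g2) with hg3def
        have hsplit : g2 = MvPowerSeries.X 1 * g3 := by
          have h3 := eq_X1pow_mul 1 hg2tf
          rwa [pow_one] at h3
        have hg3J : g3 ∈ J := (hJ.mem_or_mem (hsplit ▸ hg2J)).resolve_left ht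
        have hfeq : f = j * qf + g2 := by rw [hg2def]; ring
        rw [hfeq, map_add, coeff_mul_tfreeSupported _ _ hqfsupp]
        simp only [ee0, ee1]
        rw [Finset.sum_eq_zero fun i hi => by
          rw [hjb (a - i) (Nat.lt_of_le_of_lt (Nat.sub_le a i) ha), zero_mul]]
        rw [hsplit, X1_eq, coeff_mono_mul,
          if_pos (show 0 ≤ (ee a (b+1)) 0 ∧ 1 ≤ (ee a (b+1)) 1 by
            simp only [ee0, ee1]; omega)]
        simp only [ee0, ee1, Nat.sub_zero, Nat.add_sub_cancel]
        rw [IH b (by omega) g3 hg3J a ha]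
        ring
  -- conclusion: j is u^k times a unit, contradiction
  have hall : ∀ d : Fin 2 →₀ ℕ, d 0 < k → MvPowerSeries.coeff d j = 0 := by
    intro d hd
    have h1 := hS (d 1) j hjJ (d 0) hd
    rwa [← eq_ee d] at h1
  have hjsplit := eq_X0pow_mul k hall
  set j2 : RR := mk2 (fun d => MvPowerSeries.coeff (ee (d 0 + k) (d 1)) j) with hj2def
  have hj2J : j2 ∈ J := by
    rcases hJ.mem_or_mem (hjsplit ▸ hjJ) with h | h
    · exact absurd (hJ.mem_of_pow_mem k h) hu
    · exact h
  have hj2c : MvPowerSeries.coeff 0 j2 = 1 := by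
    rw [hj2def, coeff_mk2]
    simp only [Finsupp.coe_zero, Pi.zero_apply, zero_add]
    rw [hjtf k, if_pos rfl]
  rw [coeff_zero_of_mem hJ.ne_top hj2J] at hj2c
  exact zero_ne_one hj2c

end
/-- A prime ideal of `ℂ[[u,t]]` invariant under `t∂t - u∂u` is one of
`(0)`, `(u)`, `(t)`, `(u,t)`. -/
theorem stmt0 (J : Ideal (MvPowerSeries (Fin 2) ℂ)) (hJ : J.IsPrime)
    (hinv : ∀ f ∈ J, Dtu f ∈ J) :
    J = ⊥ ∨ J = Ideal.span {MvPowerSeries.X 0} ∨ J = Ideal.span {MvPowerSeries.X 1} ∨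
      J = Ideal.span {MvPowerSeries.X 0, MvPowerSeries.X 1} := by
  by_cases hu : MvPowerSeries.X 0 ∈ J
  · by_cases ht : MvPowerSeries.X 1 ∈ J
    · exact Or.inr (Or.inr (Or.inr (case_both hJ hu ht)))
    · exact Or.inr (Or.inl (case_u hJ hu ht))
  · by_cases ht : MvPowerSeries.X 1 ∈ J
    · exact Or.inr (Or.inr (Or.inl (case_t hJ ht hu)))
    · left
      have hinv' : ∀ f ∈ J, Dtu' f ∈ J := hinv
      have htf := tfree_zero_of_all hJ hinv' hu ht
      have hdiv : ∀ n : ℕ, ∀ f ∈ J, ∀ d : Fin 2 →₀ ℕ, d 1 < n →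
          MvPowerSeries.coeff d f = 0 := by
        intro n
        induction n with
        | zero => intro f hf d hd; omega
        | succ n IHn =>
          intro f hf d hd
          have hftf : ∀ d' : Fin 2 →₀ ℕ, d' 1 < 1 → MvPowerSeries.coeff d' f = 0 := by
            intro d' hd'
            have h1 := htf f hf (d' 0)
            rwa [show ee (d' 0) 0 = d' by
              conv_rhs => rw [eq_ee d', show d' 1 = 0 by omega]] at h1
          have heq := eq_X1pow_mul 1 hftf
          rw [pow_one] at heq
          have hgJ : mk2 (fun d => MvPowerSeries.coeff (ee (d 0) (d 1 + 1)) f) ∈ J :=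
            (hJ.mem_or_mem (heq ▸ hf)).resolve_left ht
          by_cases h1 : d 1 = 0
          · exact hftf d (by omega)
          · rw [heq, X1_eq, coeff_mono_mul,
              if_pos (show 0 ≤ d 0 ∧ 1 ≤ d 1 by omega)]
            exact IHn _ hgJ _ (by simp only [ee1]; omega)
      rw [eq_bot_iff]
      intro f hf
      rw [Ideal.mem_bot]
      ext d
      rw [map_zero]
      exact hdiv (d 1 + 1) f hf d (by omega)
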